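/- Let m, n be coprime positive integers. For any (m,n)-Dyck path D, dinv(D) = dinv(D^T), where D^T is the transpose path in the n×m rectangle. -/

import Mathlib

open Nat

/-- Number of north steps among the first `i` steps of the path `P`
(`true` = north step `N`, `false` = east step `E`). -/
def nSteps (P : List Bool) (i : ℕ) : ℕ := (P.take i).count true

/-- Number of east steps among the first `i` steps. -/
def eSteps (P : List Bool) (i : ℕ) : ℕ := (P.take i).count false

/-- Rank `m*b - n*a` of the `i`-th lattice point `(a,b)` of the path. -/
def rank (m n : ℕ) (P : List Bool) (i : ℕ) : ℤ :=
  (m : ℤ) * nSteps P i - (n : ℤ) * eSteps P i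

/-- A lattice path from `(0,0)` to `(m,n)`: `m+n` unit steps, `n` of them north. -/
def IsPath (m n : ℕ) (P : List Bool) : Prop :=
  P.length = m + n ∧ P.count true = n

/-- An `(m,n)`-Dyck path: a path staying weakly above the diagonal,
equivalently with all ranks nonnegative. -/
def IsDyck (m n : ℕ) (P : List Bool) : Prop :=
  IsPath m n P ∧ ∀ i ≤ m + n, 0 ≤ rank m n P i

/-- The set of ranks of the first `m+n` lattice points of the path. -/
def rankSet (m n : ℕ) (P : List Bool) : Finset ℤ :=
  (Finset.range (m + n)).image (rank m n P)

/-- Ranks of south ends (starting points of north steps). -/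
def southRanks (m n : ℕ) (P : List Bool) : Finset ℤ :=
  ((Finset.range (m + n)).filter (fun i => P.getD i false = true)).image (rank m n P)

/-- Ranks of west ends (starting points of east steps). -/
def westRanks (m n : ℕ) (P : List Bool) : Finset ℤ :=
  ((Finset.range (m + n)).filter (fun i => P.getD i true = false)).image (rank m n P)

/-- Transpose of a path: reverse the word and exchange `N` and `E`. -/
def transpose (P : List Bool) : List Bool := (P.map (fun b => !b)).reverse

/-- `D'` is the rank complement of `D`: its rank set is `M - r(D)`
where `M` is the maximum rank of `D`. -/
def IsRankComplement (m n : ℕ) (D D' : List Bool) : Prop :=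
  ∃ M : ℤ, IsGreatest (↑(rankSet m n D) : Set ℤ) M ∧
    rankSet m n D' = (rankSet m n D).image (fun r => M - r)

/-- A partition, encoded as a weakly decreasing list of positive integers. -/
def IsPartition (L : List ℕ) : Prop :=
  L.Pairwise (· ≥ ·) ∧ ∀ x ∈ L, 0 < x

/-- Hook length of the cell in (0-based) row `i`, column `j`. -/
def hook (L : List ℕ) (i j : ℕ) : ℕ :=
  L.getD i 0 - j + (L.drop (i + 1)).countP (fun x => decide (j < x))

/-- `L` is an `n`-core: no hook length is divisible by `n`. -/
def IsCore (n : ℕ) (L : List ℕ) : Prop :=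
  ∀ i < L.length, ∀ j < L.getD i 0, ¬ (n ∣ hook L i j)

/-- The set of first-column hook lengths of `L`. -/
def firstColHooks (L : List ℕ) : Finset ℕ :=
  (Finset.range L.length).image (fun i => hook L i 0)

/-- Conjugate (transpose) partition. -/
def conjugate (L : List ℕ) : List ℕ :=
  (List.range (L.getD 0 0)).map (fun j => L.countP (fun x => decide (j < x)))

/-- `H` is `n`-flush: no element is a multiple of `n`, and it is closed
under subtracting `n` while staying positive. -/
def IsFlush (n : ℕ) (H : Finset ℕ) : Prop :=
  (∀ h ∈ H, ¬ (n ∣ h)) ∧ ∀ h ∈ H, n < h → h - n ∈ H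

/-- `s_i^n(H)`: the maximum of `((n+H) ∪ {i}) ∩ (i + nℤ)`. -/
def sFun (n : ℕ) (H : Finset ℕ) (i : ℕ) : ℕ :=
  (insert i ((H.filter (fun h => h % n = i % n)).image (fun h => h + n))).max'
    (Finset.insert_nonempty _ _)

/-- `S^n(H) = {s_0, ..., s_{n-1}}`. -/
def sSet (n : ℕ) (H : Finset ℕ) : Finset ℕ := (Finset.range n).image (sFun n H)

/-- The lattice point `(a,b)` lies strictly to the right of the path `D`
inside the `m × n` rectangle: every lattice point of `D` at height `b`
has `x`-coordinate less than `a`. -/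
def StrictlyRightOf (m n : ℕ) (D : List Bool) (a b : ℕ) : Prop :=
  a ≤ m ∧ b ≤ n ∧ ∀ i ≤ m + n, (D.take i).count true = b → (D.take i).count false < a

/-- The positive ranks of lattice points lying strictly to the right of `D`. -/
def andersonSet (m n : ℕ) (D : List Bool) : Set ℕ :=
  {h | 0 < h ∧ ∃ a b : ℕ, StrictlyRightOf m n D a b ∧ (h : ℤ) = (m : ℤ) * b - (n : ℤ) * a}

/-- The `x`-coordinate of the vertical step of `D` at height `y`
(the number of east steps taken at heights `≤ y`). -/
def southX (D : List Bool) (y : ℕ) : ℕ :=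
  (List.range D.length).countP
    (fun i => decide (D.getD i true = false ∧ (D.take i).count true ≤ y))

/-- The partition formed by the cells above the path `D`
inside a rectangle of height `n`. -/
def pathPartition (n : ℕ) (D : List Bool) : List ℕ :=
  (((List.range n).reverse).map (fun y => southX D y)).filter (fun x => decide (0 < x))

/-- Arm of the cell `(i,j)` of `L`. -/
def armL (L : List ℕ) (i j : ℕ) : ℕ := L.getD i 0 - (j + 1)

/-- Leg of the cell `(i,j)` of `L`. -/
def legL (L : List ℕ) (i j : ℕ) : ℕ := (L.drop (i + 1)).countP (fun x => decide (j < x))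

/-- The dinv statistic of an `(m,n)`-Dyck path: the number of cells `c` of the
partition above the path with `arm(c)/(leg(c)+1) ≤ m/n < (arm(c)+1)/leg(c)`. -/
def dinv (m n : ℕ) (D : List Bool) : ℕ :=
  ((Finset.range (pathPartition n D).length ×ˢ Finset.range m).filter
    (fun p => p.2 < (pathPartition n D).getD p.1 0 ∧
      armL (pathPartition n D) p.1 p.2 * n ≤ m * (legL (pathPartition n D) p.1 p.2 + 1) ∧
      m * legL (pathPartition n D) p.1 p.2 < n * (armL (pathPartition n D) p.1 p.2 + 1))).card

/-- `codinv(D) = #{(r_s, r_w) : r_s ∈ S(D), r_w ∈ W(D), r_s < r_w}`. -/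
def codinv (m n : ℕ) (D : List Bool) : ℕ :=
  ((southRanks m n D ×ˢ westRanks m n D).filter (fun p => p.1 < p.2)).card

/-- The skew length of an `(m,n)`-core: the number of cells lying both in an
`n`-row (a row `i` with `h_i + n ∈ S^n(H_λ)`) and in the `m`-boundary
(hook length `< m`). -/
def skewLength (m n : ℕ) (L : List ℕ) : ℕ :=
  ((Finset.range L.length ×ˢ Finset.range (L.headD 0)).filter
    (fun p => p.2 < L.getD p.1 0 ∧ hook L p.1 p.2 < m ∧
      hook L p.1 0 + n ∈ sSet n (firstColHooks L))).card

-- ===== auxiliary lemmas =====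

lemma list_countP_range (k : ℕ) (p : ℕ → Prop) [DecidablePred p] :
    (List.range k).countP (fun x => decide (p x)) = ((Finset.range k).filter p).card := by
  induction k with
  | zero => simp
  | succ k ih =>
    rw [List.range_succ, List.countP_append, Finset.range_add_one, Finset.filter_insert]
    by_cases h : p k
    · rw [if_pos h, Finset.card_insert_of_notMem (by simp)]
      simp [h, ih]
    · rw [if_neg h]
      simp [h, ih]

lemma count_bool (l : List Bool) : l.count true + l.count false = l.length := by
  induction l with
  | nil => simp
  | cons a l ih => cases a <;> simp [List.count_cons] <;> omega

lemma nSteps_add_eSteps (P : List Bool) (i : ℕ) :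
    nSteps P i + eSteps P i = min i P.length := by
  have := count_bool (P.take i)
  simpa [nSteps, eSteps] using this

lemma nSteps_succ (P : List Bool) (i : ℕ) (h : i < P.length) :
    nSteps P (i+1) = nSteps P i + (if P.getD i false = true then 1 else 0) := by
  rw [nSteps, nSteps, List.take_succ, List.count_append]
  rw [List.getD_eq_getElem P false h]
  have : P[i]? = some P[i] := List.getElem?_eq_getElem h
  rw [this]
  cases hb : P[i] <;> simp [hb]

lemma eSteps_succ (P : List Bool) (i : ℕ) (h : i < P.length) :
    eSteps P (i+1) = eSteps P i + (if P.getD i true = false then 1 else 0) := by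
  rw [eSteps, eSteps, List.take_succ, List.count_append]
  rw [List.getD_eq_getElem P true h]
  have : P[i]? = some P[i] := List.getElem?_eq_getElem h
  rw [this]
  cases hb : P[i] <;> simp [hb]

lemma nSteps_mono (P : List Bool) : Monotone (nSteps P) := by
  intro i j hij
  exact List.Sublist.count_le true ((List.take_prefix_take_left (l := P) hij).sublist)

lemma eSteps_mono (P : List Bool) : Monotone (eSteps P) := by
  intro i j hij
  exact List.Sublist.count_le false ((List.take_prefix_take_left (l := P) hij).sublist)

/-- `g(x)`: number of north steps with `x`-coordinate `≤ x`. -/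
def gQ (D : List Bool) (x : ℕ) : ℕ :=
  ((Finset.range D.length).filter (fun k => D.getD k false = true ∧ eSteps D k ≤ x)).card

lemma southX_eq_card (D : List Bool) (y : ℕ) :
    southX D y = ((Finset.range D.length).filter
      (fun k => D.getD k true = false ∧ nSteps D k ≤ y)).card := by
  rw [southX]
  exact list_countP_range D.length (fun i => D.getD i true = false ∧ nSteps D i ≤ y)

lemma eSteps_take_len (D : List Bool) (i : ℕ) (h : D.length ≤ i) :
    eSteps D i = D.count false := by
  rw [eSteps, List.take_of_length_le h]

lemma nSteps_take_len (D : List Bool) (i : ℕ) (h : D.length ≤ i) :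
    nSteps D i = D.count true := by
  rw [nSteps, List.take_of_length_le h]

lemma eSteps_eq_card (D : List Bool) (i : ℕ) (h : i ≤ D.length) :
    eSteps D i = ((Finset.range i).filter (fun k => D.getD k true = false)).card := by
  induction i with
  | zero => simp [eSteps]
  | succ i ih =>
    have hi : i < D.length := h
    rw [eSteps_succ D i hi, ih (le_of_lt hi), Finset.range_add_one, Finset.filter_insert]
    by_cases hb : D.getD i true = false
    · rw [if_pos hb, if_pos hb, Finset.card_insert_of_notMem (by simp)]
    · rw [if_neg hb, if_neg hb]; simp

lemma nSteps_eq_card (D : List Bool) (i : ℕ) (h : i ≤ D.length) :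
    nSteps D i = ((Finset.range i).filter (fun k => D.getD k false = true)).card := by
  induction i with
  | zero => simp [nSteps]
  | succ i ih =>
    have hi : i < D.length := h
    rw [nSteps_succ D i hi, ih (le_of_lt hi), Finset.range_add_one, Finset.filter_insert]
    by_cases hb : D.getD i false = true
    · rw [if_pos hb, if_pos hb, Finset.card_insert_of_notMem (by simp)]
    · rw [if_neg hb, if_neg hb]; simp

lemma exists_kstar (D : List Bool) (j : ℕ) (hj : j < D.count false) :
    ∃ k, k < D.length ∧ D.getD k true = false ∧ eSteps D k = j ∧ eSteps D (k+1) = j+1 := by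
  have hne : ∃ i, j < eSteps D i := ⟨D.length, by rw [eSteps_take_len D _ le_rfl]; exact hj⟩
  classical
  set i0 := Nat.find hne with hi0
  have hmem : j < eSteps D i0 := Nat.find_spec hne
  have hpos : i0 ≠ 0 := by
    intro h0
    rw [h0] at hmem; simp [eSteps] at hmem
  obtain ⟨k, hk⟩ : ∃ k, i0 = k + 1 := ⟨i0 - 1, by omega⟩
  have hklt : ¬ (j < eSteps D k) := Nat.find_min hne (by omega)
  have hlen : k < D.length := by
    by_contra hge
    exact hklt (by rw [eSteps_take_len D k (by omega)]; exact hj)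
  have hstep := eSteps_succ D k hlen
  rw [hk] at hmem
  by_cases hb : D.getD k true = false
  · refine ⟨k, hlen, hb, ?_, ?_⟩ <;> (rw [if_pos hb] at hstep; omega)
  · rw [if_neg hb] at hstep; omega

lemma gQ_eq (D : List Bool) (j : ℕ) (hj : j < D.count false) :
    ∀ k, k < D.length → D.getD k true = false → eSteps D k = j → eSteps D (k+1) = j+1 →
    gQ D j = nSteps D k := by
  intro k hk hb hek hek1
  have hset : (Finset.range D.length).filter (fun i => D.getD i false = true ∧ eSteps D i ≤ j)
      = (Finset.range (k+1)).filter (fun i => D.getD i false = true) := by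
    ext i
    simp only [Finset.mem_filter, Finset.mem_range]
    constructor
    · rintro ⟨hi, hni, hei⟩
      refine ⟨?_, hni⟩
      by_contra hge
      have := eSteps_mono D (show k+1 ≤ i by omega)
      omega
    · rintro ⟨hi, hni⟩
      have h1 : i ≤ k := by omega
      exact ⟨by omega, hni, by have := eSteps_mono D h1; omega⟩
  have hnb : ¬ (D.getD k false = true) := by
    rw [List.getD_eq_getElem D false hk] at *
    rw [List.getD_eq_getElem D true hk] at hb
    simp [hb]
  have hns : nSteps D (k+1) = nSteps D k := by
    rw [nSteps_succ D k hk, if_neg hnb]; simp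
  rw [gQ, hset, ← nSteps_eq_card D (k+1) (by omega), hns]

lemma duality (D : List Bool) (j y : ℕ) (hj : j < D.count false) :
    j < southX D y ↔ gQ D j ≤ y := by
  obtain ⟨k, hk, hb, hek, hek1⟩ := exists_kstar D j hj
  rw [gQ_eq D j hj k hk hb hek hek1, southX_eq_card]
  constructor
  · intro hlt
    by_contra hgt
    have hsub : (Finset.range D.length).filter (fun i => D.getD i true = false ∧ nSteps D i ≤ y)
        ⊆ (Finset.range k).filter (fun i => D.getD i true = false) := by
      intro i hi
      simp only [Finset.mem_filter, Finset.mem_range] at *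
      refine ⟨?_, hi.2.1⟩
      by_contra hge
      have := nSteps_mono D (show k ≤ i by omega)
      omega
    have := Finset.card_le_card hsub
    rw [← eSteps_eq_card D k (le_of_lt hk)] at this
    omega
  · intro hle
    have hsub : (Finset.range (k+1)).filter (fun i => D.getD i true = false)
        ⊆ (Finset.range D.length).filter (fun i => D.getD i true = false ∧ nSteps D i ≤ y) := by
      intro i hi
      simp only [Finset.mem_filter, Finset.mem_range] at *
      have h1 : i ≤ k := by omega
      exact ⟨by omega, hi.2, by have := nSteps_mono D h1; omega⟩
    have := Finset.card_le_card hsub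
    rw [← eSteps_eq_card D (k+1) (by omega)] at this
    omega

lemma southX_le (D : List Bool) (y : ℕ) : southX D y ≤ D.count false := by
  rw [southX_eq_card, ← eSteps_take_len D D.length le_rfl,
    eSteps_eq_card D D.length le_rfl]
  apply Finset.card_le_card
  intro i hi
  simp only [Finset.mem_filter] at *
  exact ⟨hi.1, hi.2.1⟩

lemma gQ_le (D : List Bool) (x : ℕ) : gQ D x ≤ D.count true := by
  rw [gQ, ← nSteps_take_len D D.length le_rfl, nSteps_eq_card D D.length le_rfl]
  apply Finset.card_le_card
  intro i hi
  simp only [Finset.mem_filter] at *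
  exact ⟨hi.1, hi.2.1⟩

lemma southX_mono (D : List Bool) : Monotone (southX D) := by
  intro y y' h
  rw [southX_eq_card, southX_eq_card]
  apply Finset.card_le_card
  intro i hi
  simp only [Finset.mem_filter] at *
  exact ⟨hi.1, hi.2.1, hi.2.2.trans h⟩

lemma transpose_length (D : List Bool) : (transpose D).length = D.length := by
  simp [transpose]

lemma transpose_transpose (D : List Bool) : transpose (transpose D) = D := by
  simp only [transpose, List.map_reverse, List.reverse_reverse, List.map_map]
  have : ((fun b => !b) ∘ fun b : Bool => !b) = id := by funext b; simp
  rw [this, List.map_id]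

lemma count_map_not (l : List Bool) (b : Bool) :
    (l.map (fun x => !x)).count b = l.count (!b) := by
  induction l with
  | nil => simp
  | cons a l ih => cases a <;> cases b <;> simp_all [List.count_cons]

lemma transpose_count (D : List Bool) (b : Bool) :
    (transpose D).count b = D.count (!b) := by
  rw [transpose, List.count_reverse, count_map_not]

lemma eSteps_le (D : List Bool) (i : ℕ) : eSteps D i ≤ D.count false :=
  List.Sublist.count_le false (List.take_sublist i D)

lemma count_drop (l : List Bool) (b : Bool) (i : ℕ) :
    l.count b = (l.take i).count b + (l.drop i).count b := by
  conv_lhs => rw [← List.take_append_drop i l]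
  rw [List.count_append]

lemma transpose_getElem (D : List Bool) (k : ℕ) (h : k < D.length) :
    (transpose D)[k]'(by rw [transpose_length]; exact h) = !(D[D.length - 1 - k]'(by omega)) := by
  simp only [transpose]
  rw [List.getElem_reverse]
  simp [List.getElem_map]

lemma north_eSteps_succ (D : List Bool) (k : ℕ) (h : k < D.length)
    (hb : D.getD k false = true) : eSteps D (k+1) = eSteps D k := by
  have hnb : ¬ (D.getD k true = false) := by
    rw [List.getD_eq_getElem D true h]
    rw [List.getD_eq_getElem D false h] at hb
    simp [hb]
  rw [eSteps_succ D k h, if_neg hnb]; simp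

lemma nSteps_transpose (D : List Bool) (k : ℕ) (h : k ≤ D.length) :
    nSteps (transpose D) k = D.count false - eSteps D (D.length - k) := by
  rw [nSteps, transpose, List.take_reverse, List.count_reverse]
  rw [List.length_map]
  rw [← List.map_drop, count_map_not]
  have := count_drop D false (D.length - k)
  rw [show (!true) = false by rfl]
  rw [eSteps]
  omega

lemma southX_transpose (D : List Bool) (y' : ℕ) (hy : y' < D.count false) :
    southX (transpose D) y' + gQ D (D.count false - 1 - y') = D.count true := by
  have h1 : southX (transpose D) y' =
      ((Finset.range D.length).filter
        (fun k => D.getD k false = true ∧ ¬ (eSteps D k ≤ D.count false - 1 - y'))).card := by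
    rw [southX_eq_card, transpose_length]
    rw [show (Finset.filter (fun k => (transpose D).getD k true = false ∧ nSteps (transpose D) k ≤ y')
        (Finset.range D.length)) = (Finset.filter
        (fun k => D.getD (D.length - 1 - k) false = true ∧ D.count false - eSteps D (D.length - k) ≤ y')
        (Finset.range D.length)) from ?_]
    · apply Finset.card_nbij' (fun k => D.length - 1 - k) (fun k => D.length - 1 - k)
      · intro k hk
        simp only [Finset.mem_coe, Finset.mem_filter, Finset.mem_range] at *
        obtain ⟨hklt, h2, h3⟩ := hk
        refine ⟨by omega, h2, ?_⟩
        have hek : eSteps D (D.length - 1 - k + 1) = eSteps D (D.length - 1 - k) :=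
          north_eSteps_succ D _ (by omega) h2
        rw [show D.length - k = D.length - 1 - k + 1 by omega, hek] at h3
        omega
      · intro k hk
        simp only [Finset.mem_coe, Finset.mem_filter, Finset.mem_range] at *
        obtain ⟨hklt, h2, h3⟩ := hk
        refine ⟨by omega, ?_, ?_⟩
        · rw [show D.length - 1 - (D.length - 1 - k) = k by omega]; exact h2
        · rw [show D.length - (D.length - 1 - k) = k + 1 by omega,
            north_eSteps_succ D k (by omega) h2]
          have := eSteps_le D k
          omega
      · intro k hk
        simp only [Finset.mem_coe, Finset.mem_filter, Finset.mem_range] at hk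
        dsimp only; omega
      · intro k hk
        simp only [Finset.mem_coe, Finset.mem_filter, Finset.mem_range] at hk
        dsimp only; omega
    · apply Finset.filter_congr
      intro k hk
      simp only [Finset.mem_range] at hk
      have hkl : k < (transpose D).length := by rw [transpose_length]; exact hk
      rw [List.getD_eq_getElem _ true hkl, transpose_getElem D k hk,
        List.getD_eq_getElem D false (by omega), nSteps_transpose D k (le_of_lt hk)]
      cases hb : D[D.length - 1 - k] <;> simp
  rw [h1, gQ]
  have key := Finset.card_filter_add_card_filter_not
    (s := (Finset.range D.length).filter (fun k => D.getD k false = true))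
    (p := fun k => eSteps D k ≤ D.count false - 1 - y')
  rw [Finset.filter_filter, Finset.filter_filter] at key
  have hn : ((Finset.range D.length).filter (fun k => D.getD k false = true)).card
      = D.count true := by
    rw [← nSteps_eq_card D D.length le_rfl, nSteps_take_len D D.length le_rfl]
  omega

/-- positive entries of a weakly decreasing list form a prefix -/
lemma sorted_filter_pos (l : List ℕ) (h : l.Pairwise (· ≥ ·)) :
    l.filter (fun x => decide (0 < x)) = l.take (l.countP (fun x => decide (0 < x))) := by
  induction l with
  | nil => simp
  | cons a t ih =>
    rw [List.pairwise_cons] at h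
    by_cases ha : 0 < a
    · rw [List.filter_cons_of_pos (by simpa using ha), List.countP_cons_of_pos (by simpa using ha),
        List.take_succ_cons, ih h.2]
    · have hz : ∀ x ∈ a :: t, ¬ (0 < x) := by
        intro x hx
        rcases List.mem_cons.mp hx with rfl | hx
        · exact ha
        · have := h.1 x hx; omega
      rw [List.filter_eq_nil_iff.mpr (by intro x hx; simpa using hz x hx)]
      rw [List.countP_eq_zero.mpr (by intro x hx; simpa using hz x hx)]
      simp

lemma sorted_drop_zero (l : List ℕ) (h : l.Pairwise (· ≥ ·)) :
    ∀ x ∈ l.drop (l.countP (fun x => decide (0 < x))), x = 0 := by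
  induction l with
  | nil => simp
  | cons a t ih =>
    rw [List.pairwise_cons] at h
    by_cases ha : 0 < a
    · rw [List.countP_cons_of_pos (by simpa using ha)]
      simpa using ih h.2
    · have hz : ∀ x ∈ a :: t, x = 0 := by
        intro x hx
        rcases List.mem_cons.mp hx with rfl | hx
        · omega
        · have := h.1 x hx; omega
      rw [List.countP_eq_zero.mpr (by intro x hx; simp; have := hz x hx; omega)]
      simpa using hz

section PP
variable (ν : ℕ) (P : List Bool)

noncomputable def fullList : List ℕ := ((List.range ν).reverse).map (fun y => southX P y)

lemma fullList_length : (fullList ν P).length = ν := by simp [fullList]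

lemma fullList_getElem (k : ℕ) (hk : k < ν) :
    (fullList ν P)[k]'(by rw [fullList_length]; exact hk) = southX P (ν - 1 - k) := by
  simp only [fullList]
  rw [List.getElem_map, List.getElem_reverse]
  simp [List.getElem_range, List.length_range]

lemma fullList_sorted : (fullList ν P).Pairwise (· ≥ ·) := by
  rw [List.pairwise_iff_getElem]
  intro i j hi hj hij
  rw [fullList_length] at hi hj
  rw [fullList_getElem ν P i hi, fullList_getElem ν P j hj]
  exact southX_mono P (by omega)

lemma pathPartition_eq_take :
    pathPartition ν P = (fullList ν P).take
      ((fullList ν P).countP (fun x => decide (0 < x))) := by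
  rw [pathPartition, ← fullList, sorted_filter_pos _ (fullList_sorted ν P)]


lemma pathPartition_length_eq :
    (pathPartition ν P).length = (fullList ν P).countP (fun x => decide (0 < x)) := by
  rw [pathPartition, ← fullList, List.countP_eq_length_filter.symm]

lemma countP_le_nu : (fullList ν P).countP (fun x => decide (0 < x)) ≤ ν := by
  have h := List.countP_le_length (p := fun x => decide (0 < x)) (l := fullList ν P)
  rw [fullList_length] at h
  exact h

lemma pathPartition_length_le : (pathPartition ν P).length ≤ ν := by
  rw [pathPartition_length_eq]; exact countP_le_nu ν P

lemma pathPartition_getElem (i : ℕ) (hi : i < (pathPartition ν P).length) :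
    (pathPartition ν P)[i]'hi = southX P (ν - 1 - i) := by
  have hiν : i < ν := lt_of_lt_of_le hi (pathPartition_length_le ν P)
  rw [List.getElem_of_eq (pathPartition_eq_take ν P) hi, List.getElem_take,
    fullList_getElem ν P i hiν]

lemma pathPartition_getD (i : ℕ) (hi : i < (pathPartition ν P).length) :
    (pathPartition ν P).getD i 0 = southX P (ν - 1 - i) := by
  rw [List.getD_eq_getElem _ _ hi, pathPartition_getElem ν P i hi]

lemma pathPartition_lt_iff (i : ℕ) :
    i < (pathPartition ν P).length ↔ (i < ν ∧ 0 < southX P (ν - 1 - i)) := by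
  have hlen := pathPartition_length_eq ν P
  have hcle := countP_le_nu ν P
  constructor
  · intro hi
    have hiν : i < ν := by omega
    refine ⟨hiν, ?_⟩
    have hmem : (pathPartition ν P)[i]'hi ∈ pathPartition ν P := List.getElem_mem hi
    have hpos : 0 < (pathPartition ν P)[i]'hi := by
      have h4 : (pathPartition ν P)[i]'hi ∈
          ((((List.range ν).reverse).map (fun y => southX P y)).filter
            (fun x => decide (0 < x))) := hmem
      simpa using List.of_mem_filter h4
    rwa [pathPartition_getElem ν P i hi] at hpos
  · rintro ⟨hiν, hpos⟩
    by_contra hge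
    push_neg at hge
    have hic : (fullList ν P).countP (fun x => decide (0 < x)) ≤ i := by omega
    have hifl : i < (fullList ν P).length := by rw [fullList_length]; exact hiν
    have hdl : i - (fullList ν P).countP (fun x => decide (0 < x)) <
        ((fullList ν P).drop ((fullList ν P).countP (fun x => decide (0 < x)))).length := by
      rw [List.length_drop]; omega
    have h2 : ((fullList ν P).drop ((fullList ν P).countP (fun x => decide (0 < x))))[
        i - (fullList ν P).countP (fun x => decide (0 < x))]'hdl = (fullList ν P)[i]'hifl := by
      rw [List.getElem_drop]
      congr 1
      omega
    have hmem := List.getElem_mem hdl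
    rw [h2] at hmem
    have := sorted_drop_zero _ (fullList_sorted ν P) _ hmem
    rw [fullList_getElem ν P i hiν] at this
    omega

lemma pathPartition_leg (i j : ℕ) (hi : i < (pathPartition ν P).length) :
    legL (pathPartition ν P) i j
      = ((Finset.range (ν - 1 - i)).filter (fun y => j < southX P y)).card := by
  set c := (fullList ν P).countP (fun x => decide (0 < x)) with hc
  have hlen := pathPartition_length_eq ν P
  have hcle := countP_le_nu ν P
  have hic : i + 1 ≤ c := by omega
  rw [legL, pathPartition_eq_take, ← hc, List.drop_take]
  -- countP (take (c-(i+1)) (drop (i+1) full)) = countP (drop (i+1) full)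
  have hsplit : ((fullList ν P).drop (i+1)).countP (fun x => decide (j < x))
      = (((fullList ν P).drop (i+1)).take (c - (i+1))).countP (fun x => decide (j < x))
        + (((fullList ν P).drop (i+1)).drop (c - (i+1))).countP (fun x => decide (j < x)) := by
    conv_lhs => rw [← List.take_append_drop (c - (i+1)) ((fullList ν P).drop (i+1))]
    rw [List.countP_append]
  have hzero : (((fullList ν P).drop (i+1)).drop (c - (i+1))).countP
      (fun x => decide (j < x)) = 0 := by
    rw [List.drop_drop, show (i + 1) + (c - (i+1)) = c by omega]
    rw [List.countP_eq_zero]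
    intro x hx
    have := sorted_drop_zero _ (fullList_sorted ν P) x hx
    simp [this]
  have hdropmap : ((fullList ν P).drop (i+1)).countP (fun x => decide (j < x))
      = ((Finset.range (ν - 1 - i)).filter (fun y => j < southX P y)).card := by
    rw [fullList, ← List.map_drop, List.countP_map, List.drop_reverse, List.countP_reverse,
      List.length_range, List.take_range]
    have h1 : min (ν - (i+1)) ν = ν - 1 - i := by omega
    rw [h1]
    have h2 := list_countP_range (ν - 1 - i) (fun y => j < southX P y)
    simpa [Function.comp_def] using h2
  omega

end PP

def Aq (D : List Bool) (m y j : ℕ) : ℕ :=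
  ((Finset.range m).filter (fun j' => j < j' ∧ gQ D j' ≤ y)).card

lemma card_range_filter_le (c Y : ℕ) :
    ((Finset.range Y).filter (fun y => c ≤ y)).card = Y - c := by
  have h : (Finset.range Y).filter (fun y => c ≤ y) = Finset.Ico c Y := by
    ext x; simp [Finset.mem_Ico]; omega
  rw [h, Nat.card_Ico]

lemma card_range_filter_between (j fy M : ℕ) (h : fy ≤ M) :
    ((Finset.range M).filter (fun x => j < x ∧ x < fy)).card = fy - (j+1) := by
  have he : (Finset.range M).filter (fun x => j < x ∧ x < fy) = Finset.Ico (j+1) fy := by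
    ext x; simp [Finset.mem_Ico]; omega
  rw [he, Nat.card_Ico]

lemma cop_iff (m n : ℕ) (hm : 0 < m) (hco : Nat.Coprime m n) (A L : ℕ) (hA : A < m) :
    A * n ≤ m * (L+1) ↔ n * A < m * (L+1) := by
  have hne : A * n ≠ m * (L+1) := by
    intro he
    have hdvd : m ∣ A * n := ⟨L+1, he⟩
    have : m ∣ A := (Nat.Coprime.dvd_of_dvd_mul_right hco hdvd)
    have : A = 0 := by
      rcases this with ⟨c, rfl⟩
      rcases Nat.eq_zero_or_pos c with rfl | hc
      · simp
      · nlinarith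
    subst this
    simp at he
    omega
  rw [mul_comm n A]
  exact ⟨fun h => lt_of_le_of_ne h hne, le_of_lt⟩

section Main
variable (m n : ℕ) (D : List Bool)

lemma Aq_eq (hlen : D.length = m + n) (hF : D.count false = m) (y j : ℕ) :
    Aq D m y j = southX D y - (j+1) := by
  rw [Aq]
  have hc : (Finset.range m).filter (fun j' => j < j' ∧ gQ D j' ≤ y)
      = (Finset.range m).filter (fun j' => j < j' ∧ j' < southX D y) := by
    apply Finset.filter_congr
    intro j' hj'
    simp only [Finset.mem_range] at hj'
    exact and_congr_right (fun _ => (duality D j' y (by omega)).symm)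
  rw [hc, card_range_filter_between j (southX D y) m (by rw [← hF]; exact southX_le D y)]

lemma Aq_lt (hm : 0 < m) (hlen : D.length = m + n) (hF : D.count false = m) (y j : ℕ) :
    Aq D m y j < m := by
  rw [Aq_eq m n D hlen hF y j]
  have := southX_le D y
  omega

lemma dinv_eq_Phi (hm : 0 < m) (hn : 0 < n)
    (hlen : D.length = m + n) (hT : D.count true = n) :
    dinv m n D = ((Finset.range n ×ˢ Finset.range m).filter (fun p =>
      gQ D p.2 ≤ p.1 ∧
      Aq D m p.1 p.2 * n ≤ m * ((p.1 - gQ D p.2) + 1) ∧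
      m * (p.1 - gQ D p.2) < n * (Aq D m p.1 p.2 + 1))).card := by
  have hF : D.count false = m := by have := count_bool D; omega
  rw [dinv]
  apply Finset.card_nbij' (fun p => (n - 1 - p.1, p.2)) (fun p => (n - 1 - p.1, p.2))
  · rintro ⟨i, j⟩ hp
    simp only [Finset.mem_coe, Finset.mem_filter, Finset.mem_product, Finset.mem_range] at hp ⊢
    obtain ⟨⟨hi, hj⟩, hcell, h1, h2⟩ := hp
    have hiν : i < n := lt_of_lt_of_le hi (pathPartition_length_le n D)
    have hgd := pathPartition_getD n D i hi
    have hdualj := duality D j (n - 1 - i) (by omega)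
    rw [hgd] at hcell
    have harm : armL (pathPartition n D) i j = Aq D m (n - 1 - i) j := by
      rw [armL, hgd, Aq_eq m n D hlen hF]
    have hleg : legL (pathPartition n D) i j = (n - 1 - i) - gQ D j := by
      rw [pathPartition_leg n D i j hi]
      have hc : (Finset.range (n - 1 - i)).filter (fun y => j < southX D y)
          = (Finset.range (n - 1 - i)).filter (fun y => gQ D j ≤ y) := by
        apply Finset.filter_congr
        intro y hy
        exact duality D j y (by omega)
      rw [hc, card_range_filter_le]
    rw [harm, hleg] at h1 h2
    exact ⟨⟨by omega, hj⟩, hdualj.mp hcell, h1, h2⟩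
  · rintro ⟨y, j⟩ hp
    simp only [Finset.mem_coe, Finset.mem_filter, Finset.mem_product, Finset.mem_range] at hp ⊢
    obtain ⟨⟨hy, hj⟩, hg, h1, h2⟩ := hp
    have hyy : n - 1 - (n - 1 - y) = y := by omega
    have hdualj := duality D j y (by omega)
    have hi : n - 1 - y < (pathPartition n D).length := by
      rw [pathPartition_lt_iff]
      refine ⟨by omega, ?_⟩
      rw [hyy]
      have := hdualj.mpr hg
      omega
    have hgd := pathPartition_getD n D _ hi
    rw [hyy] at hgd
    have harm : armL (pathPartition n D) (n - 1 - y) j = Aq D m y j := by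
      rw [armL, hgd, Aq_eq m n D hlen hF]
    have hleg : legL (pathPartition n D) (n - 1 - y) j = y - gQ D j := by
      rw [pathPartition_leg n D _ j hi, hyy]
      have hc : (Finset.range y).filter (fun y' => j < southX D y')
          = (Finset.range y).filter (fun y' => gQ D j ≤ y') := by
        apply Finset.filter_congr
        intro y' hy'
        exact duality D j y' (by omega)
      rw [hc, card_range_filter_le]
    refine ⟨⟨hi, hj⟩, ?_, ?_, ?_⟩
    · rw [hgd]; exact hdualj.mpr hg
    · rw [harm, hleg]; exact h1
    · rw [harm, hleg]; exact h2
  · rintro ⟨i, j⟩ hp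
    simp only [Finset.mem_coe, Finset.mem_filter, Finset.mem_product, Finset.mem_range] at hp
    have h : i < n := lt_of_lt_of_le hp.1.1 (pathPartition_length_le n D)
    show (n - 1 - (n - 1 - i), j) = (i, j)
    rw [show n - 1 - (n - 1 - i) = i by omega]
  · rintro ⟨y, j⟩ hp
    simp only [Finset.mem_coe, Finset.mem_filter, Finset.mem_product, Finset.mem_range] at hp
    show (n - 1 - (n - 1 - y), j) = (y, j)
    rw [show n - 1 - (n - 1 - y) = y by omega]

lemma dinv_T_eq_Phi (hm : 0 < m) (hn : 0 < n)
    (hlen : D.length = m + n) (hT : D.count true = n) :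
    dinv n m (transpose D) = ((Finset.range n ×ˢ Finset.range m).filter (fun p =>
      gQ D p.2 ≤ p.1 ∧
      (p.1 - gQ D p.2) * m ≤ n * (Aq D m p.1 p.2 + 1) ∧
      n * Aq D m p.1 p.2 < m * ((p.1 - gQ D p.2) + 1))).card := by
  have hF : D.count false = m := by have := count_bool D; omega
  have hgle : ∀ x, gQ D x ≤ n := by intro x; rw [← hT]; exact gQ_le D x
  have hsx : ∀ i', i' < m → southX (transpose D) (m - 1 - i') = n - gQ D i' := by
    intro i' hi'
    have htr := southX_transpose D (m - 1 - i') (by omega)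
    rw [show D.count false - 1 - (m - 1 - i') = i' by omega] at htr
    have hg := hgle i'
    omega
  -- leg computation for transposed partition
  have hlegT : ∀ i' j', i' < (pathPartition m (transpose D)).length → j' < n →
      legL (pathPartition m (transpose D)) i' j' = Aq D m (n - 1 - j') i' := by
    intro i' j' hi' hj'
    have hi'm : i' < m := lt_of_lt_of_le hi' (pathPartition_length_le m (transpose D))
    rw [pathPartition_leg m (transpose D) i' j' hi', Aq]
    apply Finset.card_nbij' (fun y'' => m - 1 - y'') (fun x => m - 1 - x)
    · intro y'' hy''
      simp only [Finset.mem_coe, Finset.mem_filter, Finset.mem_range] at hy'' ⊢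
      obtain ⟨hylt, hsy⟩ := hy''
      have htr := southX_transpose D y'' (by omega)
      rw [show D.count false - 1 - y'' = m - 1 - y'' by omega] at htr
      refine ⟨by omega, by omega, by omega⟩
    · intro x hx
      simp only [Finset.mem_coe, Finset.mem_filter, Finset.mem_range] at hx ⊢
      obtain ⟨hxlt, hix, hgx⟩ := hx
      have htr := southX_transpose D (m - 1 - x) (by omega)
      rw [show D.count false - 1 - (m - 1 - x) = x by omega] at htr
      refine ⟨by omega, by omega⟩
    · intro y'' hy''
      simp only [Finset.mem_coe, Finset.mem_filter, Finset.mem_range] at hy''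
      dsimp only; omega
    · intro x hx
      simp only [Finset.mem_coe, Finset.mem_filter, Finset.mem_range] at hx
      dsimp only; omega
  rw [dinv]
  apply Finset.card_nbij' (fun p => (n - 1 - p.2, p.1)) (fun p => (p.2, n - 1 - p.1))
  · rintro ⟨i', j'⟩ hp
    simp only [Finset.mem_coe, Finset.mem_filter, Finset.mem_product, Finset.mem_range] at hp ⊢
    obtain ⟨⟨hi', hj'⟩, hcell, h1, h2⟩ := hp
    have hi'm : i' < m := lt_of_lt_of_le hi' (pathPartition_length_le m (transpose D))
    have hgd := pathPartition_getD m (transpose D) i' hi'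
    rw [hsx i' hi'm] at hgd
    rw [hgd] at hcell
    have harm : armL (pathPartition m (transpose D)) i' j' = (n - 1 - j') - gQ D i' := by
      rw [armL, hgd]
      have := hgle i'
      omega
    have hleg := hlegT i' j' hi' hj'
    rw [harm, hleg] at h1 h2
    have hgi := hgle i'
    refine ⟨⟨by omega, hi'm⟩, by omega, h1, h2⟩
  · rintro ⟨y, j⟩ hp
    simp only [Finset.mem_coe, Finset.mem_filter, Finset.mem_product, Finset.mem_range] at hp ⊢
    obtain ⟨⟨hy, hj⟩, hg, h1, h2⟩ := hp
    have hjlen : j < (pathPartition m (transpose D)).length := by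
      rw [pathPartition_lt_iff]
      refine ⟨hj, ?_⟩
      rw [hsx j hj]
      have := hgle j
      omega
    have hgd := pathPartition_getD m (transpose D) j hjlen
    rw [hsx j hj] at hgd
    have hyy : n - 1 - (n - 1 - y) = y := by omega
    have harm : armL (pathPartition m (transpose D)) j (n - 1 - y) = y - gQ D j := by
      rw [armL, hgd]
      have := hgle j
      omega
    have hleg : legL (pathPartition m (transpose D)) j (n - 1 - y) = Aq D m y j := by
      rw [hlegT j (n - 1 - y) hjlen (by omega), hyy]
    refine ⟨⟨hjlen, by omega⟩, ?_, ?_, ?_⟩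
    · rw [hgd]
      have := hgle j
      omega
    · rw [harm, hleg]; exact h1
    · rw [harm, hleg]; exact h2
  · rintro ⟨i', j'⟩ hp
    simp only [Finset.mem_coe, Finset.mem_filter, Finset.mem_product, Finset.mem_range] at hp
    show (i', n - 1 - (n - 1 - j')) = (i', j')
    rw [show n - 1 - (n - 1 - j') = j' by omega]
  · rintro ⟨y, j⟩ hp
    simp only [Finset.mem_coe, Finset.mem_filter, Finset.mem_product, Finset.mem_range] at hp
    show (n - 1 - (n - 1 - y), j) = (y, j)
    rw [show n - 1 - (n - 1 - y) = y by omega]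

end Main

theorem dinv_transpose' (m n : ℕ) (hm : 0 < m) (hn : 0 < n) (hco : Nat.Coprime m n)
    (D : List Bool) (hlen : D.length = m + n) (hT : D.count true = n) :
    dinv m n D = dinv n m (transpose D) := by
  have hF : D.count false = m := by have := count_bool D; omega
  rw [dinv_eq_Phi m n D hm hn hlen hT, dinv_T_eq_Phi m n D hm hn hlen hT]
  congr 1
  apply Finset.filter_congr
  rintro ⟨y, j⟩ hp
  simp only [Finset.mem_product, Finset.mem_range] at hp
  obtain ⟨hy, hj⟩ := hp
  have hA : Aq D m y j < m := Aq_lt m n D hm hlen hF y j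
  have hLg : y - gQ D j < n := by omega
  have i1 := cop_iff m n hm hco (Aq D m y j) (y - gQ D j) hA
  have i2 := cop_iff n m hn hco.symm (y - gQ D j) (Aq D m y j) hLg
  constructor
  · rintro ⟨h0, h1, h2⟩
    exact ⟨h0, i2.mpr h2, i1.mp h1⟩
  · rintro ⟨h0, h1, h2⟩
    exact ⟨h0, i1.mpr h2, i2.mp h1⟩

/-- For coprime positive `m, n` and any `(m,n)`-Dyck path `D`,
`dinv(D) = dinv(Dᵀ)` where `Dᵀ` is the transpose path in the `n × m` rectangle. -/
theorem dinv_transpose (m n : ℕ) (hm : 0 < m) (hn : 0 < n) (hco : Nat.Coprime m n)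
    (D : List Bool) (hD : IsDyck m n D) :
    dinv m n D = dinv n m (transpose D) := by
  obtain ⟨⟨hlen, hT⟩, _⟩ := hD
  exact dinv_transpose' m n hm hn hco D hlen hT
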